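/- Fix k, r ∈ ℕ and ζ ∈ ℝ. Let E_k^r(ζ) be the set of S⁴-ADHM data (a₁,a₂,b,c) at level −ζ which moreover satisfy the non-degeneracy conditions C1 and C2, with the subspace topology. Then the continuous map ι : E_k^r(ζ) → E_k^{r+2k}(ζ) sending (a₁,a₂,b,c) to (a₁, a₂, (b 0 0), (c; 0; 0)) — where b is extended by two k×k zero blocks of columns and c by two k×k zero blocks of rows — is null-homotopic, i.e. homotopic through continuous maps to a constant map. -/
import Mathlib


open Matrix

/-- The configuration space for S⁴-ADHM data:
`M_k(ℂ) × M_k(ℂ) × M_{k×r}(ℂ) × M_{r×k}(ℂ)`. -/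
abbrev ConfS4 (k r : ℕ) :=
  Matrix (Fin k) (Fin k) ℂ × Matrix (Fin k) (Fin k) ℂ ×
    Matrix (Fin k) (Fin r) ℂ × Matrix (Fin r) (Fin k) ℂ

/-- An S⁴-ADHM datum at level `−ζ`: `(a₁,a₂,b,c)` with `[a₁,a₂] + bc = 0` and
`[a₁,a₁*] + [a₂,a₂*] + bb* − c*c = −ζ·1`. -/
def IsS4ADHM {k r : ℕ} (ζ : ℝ) (p : ConfS4 k r) : Prop :=
  p.1 * p.2.1 - p.2.1 * p.1 + p.2.2.1 * p.2.2.2 = 0 ∧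
  (p.1 * p.1ᴴ - p.1ᴴ * p.1) + (p.2.1 * p.2.1ᴴ - p.2.1ᴴ * p.2.1)
      + p.2.2.1 * p.2.2.1ᴴ - p.2.2.2ᴴ * p.2.2.2
    = (-ζ : ℂ) • (1 : Matrix (Fin k) (Fin k) ℂ)

/-- The non-degeneracy conditions C1 and C2 for an S⁴-ADHM configuration
`(a₁,a₂,b,c)`, viewed through the linear maps `a₁, a₂ : W → W`, `b : ℂʳ → W`,
`c : W → ℂʳ` with `W = ℂᵏ`: no proper subspace `W' ⊊ W` contains `range b` and is
invariant under `a₁, a₂`, and no nonzero subspace `W' ⊆ ker c` is invariant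
under `a₁, a₂`. -/
def S4NonDeg {k r : ℕ} (p : ConfS4 k r) : Prop :=
  (¬ ∃ W' : Submodule ℂ (Fin k → ℂ), W' ≠ ⊤ ∧
      LinearMap.range p.2.2.1.mulVecLin ≤ W' ∧
      W'.map p.1.mulVecLin ≤ W' ∧ W'.map p.2.1.mulVecLin ≤ W') ∧
  (¬ ∃ W' : Submodule ℂ (Fin k → ℂ), W' ≠ ⊥ ∧
      W' ≤ LinearMap.ker p.2.2.2.mulVecLin ∧
      W'.map p.1.mulVecLin ≤ W' ∧ W'.map p.2.1.mulVecLin ≤ W')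

/-- Extend a `k × r` matrix by `m` zero columns. -/
def extendCols {k r : ℕ} (m : ℕ) (b : Matrix (Fin k) (Fin r) ℂ) :
    Matrix (Fin k) (Fin (r + m)) ℂ :=
  Matrix.of fun i j => if h : (j : ℕ) < r then b i ⟨j, h⟩ else 0

/-- Extend an `r × k` matrix by `m` zero rows. -/
def extendRows {k r : ℕ} (m : ℕ) (c : Matrix (Fin r) (Fin k) ℂ) :
    Matrix (Fin (r + m)) (Fin k) ℂ :=
  Matrix.of fun i j => if h : (i : ℕ) < r then c ⟨i, h⟩ j else 0

/-- The rank-stabilization map `(a₁,a₂,b,c) ↦ (a₁, a₂, (b 0 ⋯ 0), (c; 0; ⋯; 0))`. -/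
def extS4 {k r : ℕ} (m : ℕ) (p : ConfS4 k r) : ConfS4 k (r + m) :=
  (p.1, p.2.1, extendCols m p.2.2.1, extendRows m p.2.2.2)

/-! ### Auxiliary scalar functions for the null-homotopy -/

noncomputable section StabAux

def sF (t : ℝ) : ℝ := min 1 (2 - 2*t)
def tauF (t : ℝ) : ℝ := min (2*t) 1
def xF (ζ t : ℝ) : ℝ := Real.sqrt (1 + (1 - sF t ^ 2) * |ζ|)
def yF (ζ t : ℝ) : ℝ := Real.sqrt (1 + (1 - sF t ^ 2) * (|ζ| + ζ))

lemma sF_zero : sF 0 = 1 := by norm_num [sF]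
lemma tauF_zero : tauF 0 = 0 := by norm_num [tauF]
lemma sF_one : sF 1 = 0 := by norm_num [sF]
lemma tauF_one : tauF 1 = 1 := by norm_num [tauF]

lemma sF_mem {t : ℝ} (h1 : t ≤ 1) : 0 ≤ sF t ∧ sF t ≤ 1 :=
  ⟨le_min (by norm_num) (by linarith), min_le_left _ _⟩

lemma tauF_pos {t : ℝ} (h0 : 0 < t) : 0 < tauF t :=
  lt_min (by linarith) (by norm_num)

lemma tauF_eq_zero_iff {t : ℝ} (h0 : 0 ≤ t) : tauF t = 0 ↔ t = 0 := by
  constructor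
  · intro h
    by_contra ht
    exact absurd h (ne_of_gt (tauF_pos (lt_of_le_of_ne h0 (Ne.symm ht))))
  · intro h; simp [h, tauF_zero]

lemma sF_or_tauF (t : ℝ) : sF t = 1 ∨ tauF t = 1 := by
  rcases le_total t (1/2) with h | h
  · left; exact min_eq_left (by linarith)
  · right; exact min_eq_right (by linarith)

lemma xF_sq {ζ t : ℝ} (h0 : 0 ≤ t) (h1 : t ≤ 1) :
    xF ζ t ^ 2 = 1 + (1 - sF t ^ 2) * |ζ| := by
  obtain ⟨hs0, hs1⟩ := sF_mem h1
  have hq : (0:ℝ) ≤ (1 - sF t ^ 2) * |ζ| :=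
    mul_nonneg (by nlinarith) (abs_nonneg ζ)
  exact Real.sq_sqrt (by linarith)

lemma yF_sq {ζ t : ℝ} (h0 : 0 ≤ t) (h1 : t ≤ 1) :
    yF ζ t ^ 2 = 1 + (1 - sF t ^ 2) * (|ζ| + ζ) := by
  obtain ⟨hs0, hs1⟩ := sF_mem h1
  have hz : (0:ℝ) ≤ |ζ| + ζ := by cases abs_cases ζ <;> linarith [abs_nonneg ζ]
  have hq : (0:ℝ) ≤ (1 - sF t ^ 2) * (|ζ| + ζ) := mul_nonneg (by nlinarith) hz
  exact Real.sq_sqrt (by linarith)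

lemma xF_pos {ζ t : ℝ} (h0 : 0 ≤ t) (h1 : t ≤ 1) : 0 < xF ζ t := by
  obtain ⟨hs0, hs1⟩ := sF_mem h1
  have hq : (0:ℝ) ≤ (1 - sF t ^ 2) * |ζ| :=
    mul_nonneg (by nlinarith) (abs_nonneg ζ)
  exact Real.sqrt_pos.mpr (by linarith)

lemma yF_pos {ζ t : ℝ} (h0 : 0 ≤ t) (h1 : t ≤ 1) : 0 < yF ζ t := by
  obtain ⟨hs0, hs1⟩ := sF_mem h1
  have hz : (0:ℝ) ≤ |ζ| + ζ := by cases abs_cases ζ <;> linarith [abs_nonneg ζ]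
  have hq : (0:ℝ) ≤ (1 - sF t ^ 2) * (|ζ| + ζ) := mul_nonneg (by nlinarith) hz
  exact Real.sqrt_pos.mpr (by linarith)

lemma scalar_key {ζ t : ℝ} (h0 : 0 ≤ t) (h1 : t ≤ 1) :
    (sF t)^2 * (-ζ) + ((tauF t * xF ζ t)^2 - (tauF t * yF ζ t)^2) = -ζ := by
  have hx := xF_sq (ζ := ζ) h0 h1
  have hy := yF_sq (ζ := ζ) h0 h1
  rcases sF_or_tauF t with h | h <;>
    rw [mul_pow, mul_pow, hx, hy, h] <;> ring

/-! ### The homotopy datum -/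

/-- The `b`-component of the homotopy: `[s·b, τx·I, 0]`. -/
def Hb {k r : ℕ} (ζ t : ℝ) (b : Matrix (Fin k) (Fin r) ℂ) :
    Matrix (Fin k) (Fin (r + 2*k)) ℂ :=
  Matrix.of fun i j =>
    if h : (j : ℕ) < r then (sF t : ℂ) * b i ⟨j, h⟩
    else if (j : ℕ) < r + k ∧ (j : ℕ) - r = (i : ℕ) then
      ((tauF t * xF ζ t : ℝ) : ℂ) else 0

/-- The `c`-component of the homotopy: `[s·c; 0; τy·I]`. -/
def Hc {k r : ℕ} (ζ t : ℝ) (c : Matrix (Fin r) (Fin k) ℂ) :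
    Matrix (Fin (r + 2*k)) (Fin k) ℂ :=
  Matrix.of fun i j =>
    if h : (i : ℕ) < r then (sF t : ℂ) * c ⟨i, h⟩ j
    else if r + k ≤ (i : ℕ) ∧ (i : ℕ) - (r + k) = (j : ℕ) then
      ((tauF t * yF ζ t : ℝ) : ℂ) else 0

def Hdat {k r : ℕ} (ζ t : ℝ) (p : ConfS4 k r) : ConfS4 k (r + 2*k) :=
  ((sF t : ℂ) • p.1, (sF t : ℂ) • p.2.1, Hb ζ t p.2.2.1, Hc ζ t p.2.2.2)

lemma Hdat_zero {k r : ℕ} (ζ : ℝ) (p : ConfS4 k r) :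
    Hdat ζ 0 p = extS4 (2*k) p := by
  obtain ⟨a₁, a₂, b, c⟩ := p
  refine Prod.ext ?_ (Prod.ext ?_ (Prod.ext ?_ ?_))
  · show (sF 0 : ℂ) • a₁ = a₁; rw [sF_zero]; simp
  · show (sF 0 : ℂ) • a₂ = a₂; rw [sF_zero]; simp
  · show Hb ζ 0 b = extendCols (2*k) b
    ext i j
    simp only [Hb, extendCols, Matrix.of_apply, sF_zero, tauF_zero]
    split
    · norm_num
    · norm_num
  · show Hc ζ 0 c = extendRows (2*k) c
    ext i j
    simp only [Hc, extendRows, Matrix.of_apply, sF_zero, tauF_zero]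
    split
    · norm_num
    · norm_num

lemma Hdat_one {k r : ℕ} (ζ : ℝ) (p p' : ConfS4 k r) :
    Hdat ζ 1 p = Hdat ζ 1 p' := by
  refine Prod.ext ?_ (Prod.ext ?_ (Prod.ext ?_ ?_))
  · show (sF 1 : ℂ) • p.1 = (sF 1 : ℂ) • p'.1; rw [sF_one]; simp
  · show (sF 1 : ℂ) • p.2.1 = (sF 1 : ℂ) • p'.2.1; rw [sF_one]; simp
  · show Hb ζ 1 p.2.2.1 = Hb ζ 1 p'.2.2.1
    ext i j
    simp only [Hb, Matrix.of_apply, sF_one]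
    split <;> norm_num
  · show Hc ζ 1 p.2.2.2 = Hc ζ 1 p'.2.2.2
    ext i j
    simp only [Hc, Matrix.of_apply, sF_one]
    split <;> norm_num

/-! ### Product computations -/

lemma Hb_mul_Hc {k r : ℕ} (ζ t : ℝ) (b : Matrix (Fin k) (Fin r) ℂ)
    (c : Matrix (Fin r) (Fin k) ℂ) :
    Hb ζ t b * Hc ζ t c = ((sF t : ℂ))^2 • (b * c) := by
  ext i l
  simp only [Matrix.mul_apply, Matrix.smul_apply, smul_eq_mul, Finset.mul_sum]
  rw [Fin.sum_univ_add]
  have h1 : ∀ j : Fin r,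
      Hb ζ t b i (Fin.castAdd (2*k) j) * Hc ζ t c (Fin.castAdd (2*k) j) l
        = (sF t : ℂ)^2 * (b i j * c j l) := by
    intro j
    simp only [Hb, Hc, Matrix.of_apply, Fin.coe_castAdd]
    rw [dif_pos j.isLt, dif_pos j.isLt]
    simp only [Fin.eta]
    ring
  have h2 : ∀ j : Fin (2*k),
      Hb ζ t b i (Fin.natAdd r j) * Hc ζ t c (Fin.natAdd r j) l = 0 := by
    intro j
    by_cases hj : (j : ℕ) < k
    · have hz : Hc ζ t c (Fin.natAdd r j) l = 0 := by
        simp only [Hc, Matrix.of_apply, Fin.coe_natAdd]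
        rw [dif_neg (by omega), if_neg (by omega)]
      rw [hz, mul_zero]
    · have hz : Hb ζ t b i (Fin.natAdd r j) = 0 := by
        simp only [Hb, Matrix.of_apply, Fin.coe_natAdd]
        rw [dif_neg (by omega), if_neg (by omega)]
      rw [hz, zero_mul]
  rw [Finset.sum_congr rfl fun j _ => h1 j, Finset.sum_congr rfl fun j _ => h2 j,
    Finset.sum_const_zero, add_zero]

lemma Hb_mul_conjT {k r : ℕ} (ζ t : ℝ) (b : Matrix (Fin k) (Fin r) ℂ) :
    Hb ζ t b * (Hb ζ t b)ᴴ
      = ((sF t : ℂ))^2 • (b * bᴴ)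
        + (((tauF t * xF ζ t)^2 : ℝ) : ℂ) • (1 : Matrix (Fin k) (Fin k) ℂ) := by
  ext i l
  simp only [Matrix.mul_apply, Matrix.add_apply, Matrix.smul_apply,
    Matrix.conjTranspose_apply, smul_eq_mul, Finset.mul_sum]
  rw [Fin.sum_univ_add]
  have h1 : ∀ j : Fin r,
      Hb ζ t b i (Fin.castAdd (2*k) j) * star (Hb ζ t b l (Fin.castAdd (2*k) j))
        = (sF t : ℂ)^2 * (b i j * star (b l j)) := by
    intro j
    simp only [Hb, Matrix.of_apply, Fin.coe_castAdd]
    rw [dif_pos j.isLt, dif_pos j.isLt]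
    simp only [Fin.eta, star_mul', Complex.star_def, Complex.conj_ofReal]
    ring
  have h2 : ∑ j : Fin (2*k),
      Hb ζ t b i (Fin.natAdd r j) * star (Hb ζ t b l (Fin.natAdd r j))
        = (((tauF t * xF ζ t)^2 : ℝ) : ℂ) * ((1 : Matrix (Fin k) (Fin k) ℂ) i l) := by
    rw [Finset.sum_eq_single (⟨(i : ℕ), by omega⟩ : Fin (2*k))]
    · simp only [Hb, Matrix.of_apply, Fin.coe_natAdd, Fin.val_mk]
      rw [dif_neg (by omega), if_pos ⟨by omega, by omega⟩, dif_neg (by omega)]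
      have hc : ((r + (i:ℕ)) - r = (l:ℕ)) ↔ i = l := by
        rw [Fin.ext_iff]; omega
      by_cases hil : i = l
      · rw [if_pos ⟨by omega, hc.mpr hil⟩]
        simp only [Matrix.one_apply, hil, if_pos rfl, Complex.star_def,
          Complex.conj_ofReal]
        push_cast
        ring
      · rw [if_neg (by rw [not_and]; intro _ hq; exact hil (hc.mp hq))]
        simp [Matrix.one_apply, hil]
    · intro j _ hne
      have hz : Hb ζ t b i (Fin.natAdd r j) = 0 := by
        simp only [Hb, Matrix.of_apply, Fin.coe_natAdd]
        rw [dif_neg (by omega), if_neg ?_]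
        rintro ⟨h1', h2'⟩
        exact hne (Fin.ext (by simp only [Fin.val_mk]; omega))
      rw [hz, zero_mul]
    · intro h; exact absurd (Finset.mem_univ _) h
  rw [Finset.sum_congr rfl fun j _ => h1 j, h2]

lemma HcH_mul_Hc {k r : ℕ} (ζ t : ℝ) (c : Matrix (Fin r) (Fin k) ℂ) :
    (Hc ζ t c)ᴴ * Hc ζ t c
      = ((sF t : ℂ))^2 • (cᴴ * c)
        + (((tauF t * yF ζ t)^2 : ℝ) : ℂ) • (1 : Matrix (Fin k) (Fin k) ℂ) := by
  ext i l
  simp only [Matrix.mul_apply, Matrix.add_apply, Matrix.smul_apply,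
    Matrix.conjTranspose_apply, smul_eq_mul, Finset.mul_sum]
  rw [Fin.sum_univ_add]
  have h1 : ∀ j : Fin r,
      star (Hc ζ t c (Fin.castAdd (2*k) j) i) * Hc ζ t c (Fin.castAdd (2*k) j) l
        = (sF t : ℂ)^2 * (star (c j i) * c j l) := by
    intro j
    simp only [Hc, Matrix.of_apply, Fin.coe_castAdd]
    rw [dif_pos j.isLt, dif_pos j.isLt]
    simp only [Fin.eta, star_mul', Complex.star_def, Complex.conj_ofReal]
    ring
  have h2 : ∑ j : Fin (2*k),
      star (Hc ζ t c (Fin.natAdd r j) i) * Hc ζ t c (Fin.natAdd r j) l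
        = (((tauF t * yF ζ t)^2 : ℝ) : ℂ) * ((1 : Matrix (Fin k) (Fin k) ℂ) i l) := by
    rw [Finset.sum_eq_single (⟨k + (i : ℕ), by omega⟩ : Fin (2*k))]
    · simp only [Hc, Matrix.of_apply, Fin.coe_natAdd, Fin.val_mk]
      rw [dif_neg (by omega), dif_neg (by omega),
        if_pos ⟨by omega, show (r + (k + (i:ℕ))) - (r+k) = (i:ℕ) by omega⟩]
      have hc : ((r + (k + (i:ℕ))) - (r + k) = (l:ℕ)) ↔ i = l := by
        rw [Fin.ext_iff]; omega
      by_cases hil : i = l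
      · rw [if_pos ⟨by omega, hc.mpr hil⟩]
        simp only [Matrix.one_apply, hil, if_pos rfl, Complex.star_def,
          Complex.conj_ofReal]
        push_cast
        ring
      · rw [if_neg (by rw [not_and]; intro _ hq; exact hil (hc.mp hq))]
        simp [Matrix.one_apply, hil]
    · intro j _ hne
      have hz : Hc ζ t c (Fin.natAdd r j) i = 0 := by
        simp only [Hc, Matrix.of_apply, Fin.coe_natAdd]
        by_cases hjk : k ≤ (j : ℕ)
        · rw [dif_neg (by omega), if_neg ?_]
          rintro ⟨h1', h2'⟩
          exact hne (Fin.ext (by simp only [Fin.val_mk]; omega))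
        · rw [dif_neg (by omega), if_neg (by omega)]
      rw [hz, star_zero, zero_mul]
    · intro h; exact absurd (Finset.mem_univ _) h
  rw [Finset.sum_congr rfl fun j _ => h1 j, h2]

/-! ### The ADHM equations along the homotopy -/

lemma adhm_Hdat {k r : ℕ} {ζ t : ℝ} (h0 : 0 ≤ t) (h1 : t ≤ 1)
    (p : ConfS4 k r) (hor : IsS4ADHM ζ p ∨ sF t = 0) :
    IsS4ADHM ζ (Hdat ζ t p) := by
  obtain ⟨a₁, a₂, b, c⟩ := p
  have hstar : star ((sF t : ℝ) : ℂ) = ((sF t : ℝ) : ℂ) := by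
    simp [Complex.star_def, Complex.conj_ofReal]
  constructor
  · show ((sF t : ℂ) • a₁) * ((sF t : ℂ) • a₂) - ((sF t : ℂ) • a₂) * ((sF t : ℂ) • a₁)
      + Hb ζ t b * Hc ζ t c = 0
    rw [smul_mul_assoc, mul_smul_comm, smul_smul,
        smul_mul_assoc, mul_smul_comm, smul_smul, Hb_mul_Hc, ← sq,
        ← smul_sub, ← smul_add]
    rcases hor with hp | hs
    · rw [show a₁ * a₂ - a₂ * a₁ + b * c = 0 from hp.1, smul_zero]
    · rw [hs]; norm_num
  · show ((sF t : ℂ) • a₁) * ((sF t : ℂ) • a₁)ᴴ - ((sF t : ℂ) • a₁)ᴴ * ((sF t : ℂ) • a₁)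
      + (((sF t : ℂ) • a₂) * ((sF t : ℂ) • a₂)ᴴ - ((sF t : ℂ) • a₂)ᴴ * ((sF t : ℂ) • a₂))
      + Hb ζ t b * (Hb ζ t b)ᴴ - (Hc ζ t c)ᴴ * Hc ζ t c
      = (-ζ : ℂ) • 1
    rw [Matrix.conjTranspose_smul, hstar, Matrix.conjTranspose_smul, hstar,
      Hb_mul_conjT, HcH_mul_Hc]
    have key : ((sF t : ℂ) • a₁) * ((sF t : ℂ) • a₁ᴴ) - ((sF t : ℂ) • a₁ᴴ) * ((sF t : ℂ) • a₁)
        + (((sF t : ℂ) • a₂) * ((sF t : ℂ) • a₂ᴴ) - ((sF t : ℂ) • a₂ᴴ) * ((sF t : ℂ) • a₂))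
        + ((sF t : ℂ)^2 • (b * bᴴ) + (((tauF t * xF ζ t)^2 : ℝ) : ℂ) • 1)
        - ((sF t : ℂ)^2 • (cᴴ * c) + (((tauF t * yF ζ t)^2 : ℝ) : ℂ) • 1)
        = (sF t : ℂ)^2 • ((a₁ * a₁ᴴ - a₁ᴴ * a₁) + (a₂ * a₂ᴴ - a₂ᴴ * a₂)
            + b * bᴴ - cᴴ * c)
          + ((((tauF t * xF ζ t)^2 : ℝ) : ℂ) - (((tauF t * yF ζ t)^2 : ℝ) : ℂ)) • 1 := by
      simp only [smul_mul_assoc, mul_smul_comm, smul_smul, ← sq]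
      module
    rw [key]
    have hk := scalar_key (ζ := ζ) h0 h1
    have hkC : ((sF t : ℂ))^2 * (-ζ : ℂ)
        + ((((tauF t * xF ζ t)^2 : ℝ) : ℂ) - (((tauF t * yF ζ t)^2 : ℝ) : ℂ))
        = (-ζ : ℂ) := by exact_mod_cast hk
    rcases hor with hp | hs
    · rw [hp.2, smul_smul, ← add_smul, hkC]
    · have hz2 : ((sF t : ℂ))^2 • ((a₁ * a₁ᴴ - a₁ᴴ * a₁) + (a₂ * a₂ᴴ - a₂ᴴ * a₂)
          + b * bᴴ - cᴴ * c) = 0 := by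
        rw [hs]; norm_num
      rw [hz2, zero_add]
      congr 1
      rw [hs] at hkC
      push_cast at hkC ⊢
      linear_combination hkC

/-! ### Non-degeneracy -/

lemma nondeg_ext {k r : ℕ} (p : ConfS4 k r) (h : S4NonDeg p) :
    S4NonDeg (extS4 (2*k) p) := by
  obtain ⟨a₁, a₂, b, c⟩ := p
  constructor
  · rintro ⟨W', hW, hrange, hi1, hi2⟩
    refine h.1 ⟨W', hW, ?_, hi1, hi2⟩
    rintro - ⟨w, rfl⟩
    apply hrange
    refine ⟨fun j => if hj : (j : ℕ) < r then w ⟨j, hj⟩ else 0, ?_⟩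
    show (extendCols (2*k) b).mulVec _ = b.mulVec w
    funext i
    simp only [Matrix.mulVec, dotProduct, extendCols, Matrix.of_apply]
    rw [Fin.sum_univ_add]
    have h1 : ∀ j : Fin r,
        (if h : ((Fin.castAdd (2*k) j : Fin (r + 2*k)) : ℕ) < r then b i ⟨_, h⟩ else 0) *
          (if hj : ((Fin.castAdd (2*k) j : Fin (r + 2*k)) : ℕ) < r then w ⟨_, hj⟩ else 0)
          = b i j * w j := by
      intro j
      rw [dif_pos, dif_pos] <;> simp [Fin.coe_castAdd, j.isLt]
    have h2 : ∀ j : Fin (2*k),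
        (if h : ((Fin.natAdd r j : Fin (r + 2*k)) : ℕ) < r then b i ⟨_, h⟩ else 0) *
          (if hj : ((Fin.natAdd r j : Fin (r + 2*k)) : ℕ) < r then w ⟨_, hj⟩ else 0)
          = 0 := by
      intro j
      rw [dif_neg (by simp [Fin.coe_natAdd]), zero_mul]
    rw [Finset.sum_congr rfl fun j _ => h1 j, Finset.sum_congr rfl fun j _ => h2 j,
      Finset.sum_const_zero, add_zero]
  · rintro ⟨W', hW, hker, hi1, hi2⟩
    refine h.2 ⟨W', hW, ?_, hi1, hi2⟩
    intro v hv
    have h0 := hker hv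
    simp only [LinearMap.mem_ker, Matrix.mulVecLin_apply] at h0 ⊢
    funext i
    have := congrFun h0 (Fin.castAdd (2*k) i)
    simp only [extS4, Matrix.mulVec, dotProduct, extendRows, Matrix.of_apply,
      Fin.coe_castAdd, Pi.zero_apply] at this ⊢
    rw [← this]
    refine Finset.sum_congr rfl fun l _ => ?_
    rw [dif_pos i.isLt]

lemma nondeg_blocks {k r : ℕ} {ζ t : ℝ} (h0 : 0 ≤ t) (h1 : t ≤ 1)
    (hτ : 0 < tauF t) (p : ConfS4 k r) : S4NonDeg (Hdat ζ t p) := by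
  obtain ⟨a₁, a₂, b, c⟩ := p
  have hx : (0:ℝ) < tauF t * xF ζ t := mul_pos hτ (xF_pos h0 h1)
  have hy : (0:ℝ) < tauF t * yF ζ t := mul_pos hτ (yF_pos h0 h1)
  constructor
  · rintro ⟨W', hW, hrange, -, -⟩
    apply hW
    rw [eq_top_iff]
    intro v _
    apply hrange
    refine ⟨fun j => if hj : r ≤ (j : ℕ) ∧ (j : ℕ) < r + k then
      (((tauF t * xF ζ t)⁻¹ : ℝ) : ℂ) * v ⟨(j : ℕ) - r, by omega⟩ else 0, ?_⟩
    show (Hb ζ t b).mulVec _ = v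
    funext i
    simp only [Matrix.mulVec, dotProduct]
    rw [Finset.sum_eq_single (⟨r + (i : ℕ), by omega⟩ : Fin (r + 2*k))]
    · simp only [Hb, Matrix.of_apply, Fin.val_mk]
      rw [dif_neg (by omega), if_pos ⟨by omega, by omega⟩, dif_pos ⟨by omega, by omega⟩]
      rw [show (⟨r + (i:ℕ) - r, by omega⟩ : Fin k) = i from Fin.ext (by simp)]
      rw [Complex.ofReal_inv, ← mul_assoc, mul_inv_cancel₀ (by
        exact_mod_cast Complex.ofReal_ne_zero.mpr (ne_of_gt hx)), one_mul]
    · intro j _ hne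
      by_cases hjr : (j : ℕ) < r
      · rw [dif_neg (by omega), mul_zero]
      · by_cases hcond : (j : ℕ) < r + k ∧ (j : ℕ) - r = (i : ℕ)
        · exact absurd (Fin.ext (by simp only [Fin.val_mk]; omega) : j = ⟨r + (i:ℕ), by omega⟩) hne
        · have hz : Hb ζ t b i j = 0 := by
            simp only [Hb, Matrix.of_apply]
            rw [dif_neg hjr, if_neg hcond]
          rw [hz, zero_mul]
    · intro h; exact absurd (Finset.mem_univ _) h
  · rintro ⟨W', hW, hker, -, -⟩
    apply hW
    rw [eq_bot_iff]
    intro v hv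
    have hc0 := hker hv
    simp only [LinearMap.mem_ker, Matrix.mulVecLin_apply] at hc0
    simp only [Submodule.mem_bot]
    funext j
    have := congrFun hc0 (⟨r + k + (j : ℕ), by omega⟩ : Fin (r + 2*k))
    simp only [Hdat, Matrix.mulVec, dotProduct, Pi.zero_apply] at this
    rw [Finset.sum_eq_single j] at this
    · simp only [Hc, Matrix.of_apply, Fin.val_mk] at this
      rw [dif_neg (by omega), if_pos ⟨by omega, by omega⟩] at this
      have hy' : ((tauF t * yF ζ t : ℝ) : ℂ) ≠ 0 :=
        Complex.ofReal_ne_zero.mpr (ne_of_gt hy)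
      exact (mul_eq_zero.mp this).resolve_left hy'
    · intro l _ hne
      have hz : Hc ζ t c (⟨r + k + (j : ℕ), by omega⟩ : Fin (r + 2*k)) l = 0 := by
        simp only [Hc, Matrix.of_apply, Fin.val_mk]
        rw [dif_neg (by omega), if_neg ?_]
        rintro ⟨-, h2'⟩
        exact hne (Fin.ext (by omega)).symm
      rw [hz, zero_mul]
    · intro h; exact absurd (Finset.mem_univ _) h

/-! ### Continuity -/

lemma continuous_Hdat (k r : ℕ) (ζ : ℝ) :
    Continuous fun z : ℝ × ConfS4 k r => Hdat ζ z.1 z.2 := by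
  have hsR : Continuous sF := by unfold sF; fun_prop
  have hsC : Continuous fun z : ℝ × ConfS4 k r => ((sF z.1 : ℝ) : ℂ) :=
    Complex.continuous_ofReal.comp (hsR.comp continuous_fst)
  have hτR : Continuous tauF := by unfold tauF; fun_prop
  have hxR : Continuous fun t : ℝ => xF ζ t := by
    unfold xF
    exact Real.continuous_sqrt.comp
      (continuous_const.add ((continuous_const.sub (hsR.pow 2)).mul continuous_const))
  have hyR : Continuous fun t : ℝ => yF ζ t := by
    unfold yF
    exact Real.continuous_sqrt.comp
      (continuous_const.add ((continuous_const.sub (hsR.pow 2)).mul continuous_const))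
  have hx : Continuous fun z : ℝ × ConfS4 k r => ((tauF z.1 * xF ζ z.1 : ℝ) : ℂ) :=
    Complex.continuous_ofReal.comp ((hτR.mul hxR).comp continuous_fst)
  have hy : Continuous fun z : ℝ × ConfS4 k r => ((tauF z.1 * yF ζ z.1 : ℝ) : ℂ) :=
    Complex.continuous_ofReal.comp ((hτR.mul hyR).comp continuous_fst)
  have ha1 : Continuous fun z : ℝ × ConfS4 k r => z.2.1 :=
    continuous_fst.comp continuous_snd
  have ha2 : Continuous fun z : ℝ × ConfS4 k r => z.2.2.1 :=
    continuous_fst.comp (continuous_snd.comp continuous_snd)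
  have hbm : Continuous fun z : ℝ × ConfS4 k r => z.2.2.2.1 :=
    continuous_fst.comp (continuous_snd.comp (continuous_snd.comp continuous_snd))
  have hcm : Continuous fun z : ℝ × ConfS4 k r => z.2.2.2.2 :=
    continuous_snd.comp (continuous_snd.comp (continuous_snd.comp continuous_snd))
  refine Continuous.prodMk (hsC.smul ha1)
    (Continuous.prodMk (hsC.smul ha2) (Continuous.prodMk ?_ ?_))
  · apply continuous_pi; intro i; apply continuous_pi; intro j
    show Continuous fun z : ℝ × ConfS4 k r => Hb ζ z.1 z.2.2.2.1 i j
    simp only [Hb, Matrix.of_apply]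
    by_cases h : (j : ℕ) < r
    · simp only [dif_pos h]
      exact hsC.mul ((continuous_apply (⟨(j:ℕ), h⟩ : Fin r)).comp
        ((continuous_apply i).comp hbm))
    · simp only [dif_neg h]
      by_cases h2 : (j : ℕ) < r + k ∧ (j : ℕ) - r = (i : ℕ)
      · simp only [if_pos h2]; exact hx
      · simp only [if_neg h2]; exact continuous_const
  · apply continuous_pi; intro i; apply continuous_pi; intro j
    show Continuous fun z : ℝ × ConfS4 k r => Hc ζ z.1 z.2.2.2.2 i j
    simp only [Hc, Matrix.of_apply]
    by_cases h : (i : ℕ) < r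
    · simp only [dif_pos h]
      exact hsC.mul ((continuous_apply j).comp
        ((continuous_apply (⟨(i:ℕ), h⟩ : Fin r)).comp hcm))
    · simp only [dif_neg h]
      by_cases h2 : r + k ≤ (i : ℕ) ∧ (i : ℕ) - (r + k) = (j : ℕ)
      · simp only [if_pos h2]; exact hy
      · simp only [if_neg h2]; exact continuous_const

end StabAux

/-! ### The main theorem -/

/-- The inclusion `E_k^r(ζ) → E_k^{r+2k}(ζ)`, `(a₁,a₂,b,c) ↦ (a₁,a₂,(b 0 0),(c;0;0))`,
of the spaces of non-degenerate S⁴-ADHM data at level `−ζ` is a well-defined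
continuous map and is null-homotopic. -/
theorem stmt14 (k r : ℕ) (ζ : ℝ) :
    ∃ f : C({p : ConfS4 k r // IsS4ADHM ζ p ∧ S4NonDeg p},
            {p : ConfS4 k (r + 2 * k) // IsS4ADHM ζ p ∧ S4NonDeg p}),
      (∀ p, (f p : ConfS4 k (r + 2 * k)) = extS4 (2 * k) (p : ConfS4 k r)) ∧
      ∃ q, f.Homotopic (ContinuousMap.const _ q) := by
  classical
  have memH : ∀ t : ℝ, 0 ≤ t → t ≤ 1 → ∀ p : ConfS4 k r,
      (IsS4ADHM ζ p ∨ sF t = 0) → (S4NonDeg p ∨ 0 < tauF t) →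
      IsS4ADHM ζ (Hdat ζ t p) ∧ S4NonDeg (Hdat ζ t p) := by
    intro t h0 h1 p hA hN
    refine ⟨adhm_Hdat h0 h1 p hA, ?_⟩
    rcases hN with hN | hτ
    · by_cases hτ0 : 0 < tauF t
      · exact nondeg_blocks h0 h1 hτ0 p
      · have hτz : tauF t = 0 :=
          le_antisymm (not_lt.mp hτ0) (le_min (by linarith) (by norm_num))
        have ht0 : t = 0 := (tauF_eq_zero_iff h0).mp hτz
        subst ht0
        rw [Hdat_zero]
        exact nondeg_ext p hN
    · exact nondeg_blocks h0 h1 hτ p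
  have hco := continuous_Hdat k r ζ
  refine ⟨⟨fun p => ⟨extS4 (2 * k) p.1, by
      rw [← Hdat_zero ζ p.1]
      exact memH 0 le_rfl zero_le_one p.1 (Or.inl p.2.1) (Or.inl p.2.2)⟩, ?_⟩,
    fun p => rfl, ?_⟩
  · apply Continuous.subtype_mk
    exact Continuous.congr
      (hco.comp (continuous_const.prodMk continuous_subtype_val))
      (fun p => Hdat_zero ζ p.1)
  · refine ⟨⟨Hdat ζ 1 (0 : ConfS4 k r),
      memH 1 zero_le_one le_rfl 0 (Or.inr sF_one)
        (Or.inr (by rw [tauF_one]; norm_num))⟩, ⟨?_⟩⟩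
    refine
      { toContinuousMap := ⟨fun z => ⟨Hdat ζ (z.1 : ℝ) z.2.1,
          memH z.1 z.1.2.1 z.1.2.2 z.2.1 (Or.inl z.2.2.1) (Or.inl z.2.2.2)⟩, ?_⟩,
        map_zero_left := ?_, map_one_left := ?_ }
    · apply Continuous.subtype_mk
      exact hco.comp ((continuous_subtype_val.comp continuous_fst).prodMk
        (continuous_subtype_val.comp continuous_snd))
    · intro x
      apply Subtype.ext
      show Hdat ζ ((0 : unitInterval) : ℝ) x.1 = extS4 (2 * k) x.1
      rw [show ((0 : unitInterval) : ℝ) = 0 from rfl, Hdat_zero]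
    · intro x
      apply Subtype.ext
      show Hdat ζ ((1 : unitInterval) : ℝ) x.1 = Hdat ζ 1 (0 : ConfS4 k r)
      rw [show ((1 : unitInterval) : ℝ) = 1 from rfl]
      exact Hdat_one ζ x.1 0
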